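/- Fix t > 1. Then Σ_{b ∈ I_τ} |b|^{−2t} tends to 0 as τ → ∞ in A₀: for every ε > 0 there exists N > 0 such that for all τ ∈ A₀ with |τ| ≥ N, one has Σ_{(m,n) ∈ ℕ₊×ℕ₊} |m + nτ|^{−2t} < ε. -/

import Mathlib

open Complex Metric Filter Set
open scoped ENNReal NNReal Topology

noncomputable section

/-- The parameter space `A₀ = {u+iv : u ≥ 0, v ≥ 1}`. -/
def A0 : Set ℂ := {τ : ℂ | 0 ≤ τ.re ∧ 1 ≤ τ.im}

/-- The phase space `X = {z : |z - 1/2| ≤ 1/2}`. -/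
def Xcl : Set ℂ := {z : ℂ | ‖z - 1/2‖ ≤ 1/2}

/-- The alphabet `I_τ = {m + nτ : m, n ∈ ℕ₊}`. -/
def Itau (τ : ℂ) : Set ℂ := {b : ℂ | ∃ m n : ℕ+, b = ((m : ℕ) : ℂ) + ((n : ℕ) : ℂ) * τ}

/-- The generator `φ_b(z) = 1/(z+b)`. -/
def phi (b z : ℂ) : ℂ := 1 / (z + b)

/-- Real key inequality: `m·n·|τ| ≤ |m+nτ|²` for `τ ∈ A₀`. -/
lemma key_real (τ : ℂ) (hre : 0 ≤ τ.re) (him : 1 ≤ τ.im) (m n : ℕ+) :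
    ((m : ℕ) : ℝ) * ((n : ℕ) : ℝ) * ‖τ‖ ≤ ‖((m : ℕ) : ℂ) + ((n : ℕ) : ℂ) * τ‖ ^ 2 := by
  set M : ℝ := ((m : ℕ) : ℝ)
  set L : ℝ := ((n : ℕ) : ℝ)
  have hM : 1 ≤ M := Nat.one_le_cast.2 m.pos
  have hL : 1 ≤ L := Nat.one_le_cast.2 n.pos
  have hb : ‖((m : ℕ) : ℂ) + ((n : ℕ) : ℂ) * τ‖ ^ 2 = (M + L * τ.re) ^ 2 + (L * τ.im) ^ 2 := by
    rw [Complex.sq_norm, Complex.normSq_apply]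
    simp [Complex.add_re, Complex.add_im, Complex.mul_re, Complex.mul_im]
    ring
  have hτ : ‖τ‖ ^ 2 = τ.re ^ 2 + τ.im ^ 2 := by
    rw [Complex.sq_norm, Complex.normSq_apply]; ring
  have hτ0 : 0 ≤ ‖τ‖ := norm_nonneg _
  rw [hb]
  have hM0 : (0:ℝ) ≤ M := zero_le_one.trans hM
  have hL0 : (0:ℝ) ≤ L := zero_le_one.trans hL
  have hML : 0 ≤ M * L * τ.re := mul_nonneg (mul_nonneg hM0 hL0) hre
  have h3 : (L * ‖τ‖) ^ 2 = (L * τ.re) ^ 2 + (L * τ.im) ^ 2 := by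
    rw [mul_pow, mul_pow, mul_pow, hτ]; ring
  nlinarith [sq_nonneg (M - L * ‖τ‖), hML, h3,
    mul_nonneg hM0 (mul_nonneg hL0 hτ0)]

/-- For fixed `t > 1`, `Σ_{b ∈ I_τ} |b|^{-2t} → 0` as `τ → ∞` in `A₀`. -/
theorem stmt8 :
    ∀ t : ℝ, 1 < t → ∀ ε : ℝ, 0 < ε → ∃ N : ℝ, 0 < N ∧
      ∀ τ ∈ A0, N ≤ ‖τ‖ →
        (∑' p : ℕ+ × ℕ+,
            ((‖((p.1 : ℕ) : ℂ) + ((p.2 : ℕ) : ℂ) * τ‖₊ : ℝ≥0∞) ^ (-(2 * t)))) <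
          ENNReal.ofReal ε := by
  intro t ht ε hε
  have ht0 : (0 : ℝ) < t := by linarith
  -- the one-variable zeta-like sum
  set C : ℝ≥0∞ := ∑' n : ℕ+, ((n : ℕ) : ℝ≥0∞) ^ (-t) with hCdef
  have hCtop : C ≠ ⊤ := by
    have hsum : Summable (fun n : ℕ+ => (((n : ℕ) : ℝ≥0) ^ (-t) : ℝ≥0)) := by
      rw [← NNReal.summable_coe]
      have h1 : Summable (fun n : ℕ => (n : ℝ) ^ (-t)) :=
        Real.summable_nat_rpow.2 (by linarith)
      have h2 : Summable (fun n : ℕ+ => ((n : ℕ) : ℝ) ^ (-t)) :=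
        h1.comp_injective PNat.coe_injective
      convert h2 using 2 with n
      simp [NNReal.coe_rpow]
    have : C = ∑' n : ℕ+, ((((n : ℕ) : ℝ≥0) ^ (-t) : ℝ≥0) : ℝ≥0∞) := by
      rw [hCdef]
      congr 1; funext n
      rw [ENNReal.coe_rpow_of_ne_zero (by exact_mod_cast n.pos.ne')]
      norm_cast
    rw [this, ENNReal.tsum_coe_ne_top_iff_summable]
    exact hsum
  obtain ⟨K, hK0, hCK⟩ : ∃ K : ℝ, 0 < K ∧ C * C ≤ ENNReal.ofReal K := by
    have hfin : C * C ≠ ⊤ := ENNReal.mul_ne_top hCtop hCtop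
    refine ⟨(C * C).toReal + 1, by positivity, ?_⟩
    exact le_trans (le_of_eq (ENNReal.ofReal_toReal hfin).symm)
      (ENNReal.ofReal_le_ofReal (by linarith))
  set N : ℝ := max 1 ((K / ε) ^ t⁻¹ + 1) with hNdef
  have hN1 : 1 ≤ N := le_max_left _ _
  refine ⟨N, by linarith, ?_⟩
  intro τ hτ hNτ
  obtain ⟨hre, him⟩ := hτ
  have hτ1 : (1 : ℝ) ≤ ‖τ‖ := le_trans hN1 hNτ
  have hτ0 : (0 : ℝ) < ‖τ‖ := by linarith
  have hτnn0 : (‖τ‖₊ : ℝ≥0∞) ≠ 0 := by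
    simp only [ne_eq, ENNReal.coe_eq_zero, nnnorm_eq_zero]
    rintro rfl; simp at hτ0
  -- termwise bound
  have hterm : ∀ p : ℕ+ × ℕ+,
      ((‖((p.1 : ℕ) : ℂ) + ((p.2 : ℕ) : ℂ) * τ‖₊ : ℝ≥0∞) ^ (-(2 * t))) ≤
        (‖τ‖₊ : ℝ≥0∞) ^ (-t) * (((p.1 : ℕ) : ℝ≥0∞) ^ (-t) * ((p.2 : ℕ) : ℝ≥0∞) ^ (-t)) := by
    rintro ⟨m, n⟩
    set b : ℂ := ((m : ℕ) : ℂ) + ((n : ℕ) : ℂ) * τ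
    have hm0 : ((m : ℕ) : ℝ≥0∞) ≠ 0 := by exact_mod_cast m.pos.ne'
    have hn0 : ((n : ℕ) : ℝ≥0∞) ≠ 0 := by exact_mod_cast n.pos.ne'
    have hmt : ((m : ℕ) : ℝ≥0∞) ≠ ⊤ := ENNReal.natCast_ne_top _
    have hnt : ((n : ℕ) : ℝ≥0∞) ≠ ⊤ := ENNReal.natCast_ne_top _
    -- key: m*n*|τ| ≤ |b|^2 in ℝ≥0∞
    have hkey : ((m : ℕ) : ℝ≥0∞) * ((n : ℕ) : ℝ≥0∞) * (‖τ‖₊ : ℝ≥0∞) ≤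
        (‖b‖₊ : ℝ≥0∞) ^ (2 : ℕ) := by
      have := key_real τ hre him m n
      rw [← ENNReal.coe_natCast, ← ENNReal.coe_natCast, ← ENNReal.coe_mul, ← ENNReal.coe_mul,
        ← ENNReal.coe_pow, ENNReal.coe_le_coe, ← NNReal.coe_le_coe]
      push_cast
      simpa using this
    -- raise to power -t
    have h1 : ((‖b‖₊ : ℝ≥0∞) ^ (2 : ℕ)) ^ (-t) ≤
        (((m : ℕ) : ℝ≥0∞) * ((n : ℕ) : ℝ≥0∞) * (‖τ‖₊ : ℝ≥0∞)) ^ (-t) := by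
      rw [ENNReal.rpow_neg, ENNReal.rpow_neg]
      exact ENNReal.inv_le_inv.2 (ENNReal.rpow_le_rpow hkey ht0.le)
    have h2 : ((‖b‖₊ : ℝ≥0∞) ^ (2 : ℕ)) ^ (-t) = (‖b‖₊ : ℝ≥0∞) ^ (-(2 * t)) := by
      rw [← ENNReal.rpow_natCast (‖b‖₊ : ℝ≥0∞) 2, ← ENNReal.rpow_mul]
      norm_num
    have h3 : (((m : ℕ) : ℝ≥0∞) * ((n : ℕ) : ℝ≥0∞) * (‖τ‖₊ : ℝ≥0∞)) ^ (-t) =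
        (‖τ‖₊ : ℝ≥0∞) ^ (-t) * (((m : ℕ) : ℝ≥0∞) ^ (-t) * ((n : ℕ) : ℝ≥0∞) ^ (-t)) := by
      rw [ENNReal.mul_rpow_of_ne_zero (mul_ne_zero hm0 hn0) hτnn0,
        ENNReal.mul_rpow_of_ne_zero hm0 hn0]
      ring
    calc (‖b‖₊ : ℝ≥0∞) ^ (-(2 * t)) = ((‖b‖₊ : ℝ≥0∞) ^ (2 : ℕ)) ^ (-t) := h2.symm
      _ ≤ _ := h1
      _ = _ := h3
  -- sum the bound
  have hsum_le : (∑' p : ℕ+ × ℕ+,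
      ((‖((p.1 : ℕ) : ℂ) + ((p.2 : ℕ) : ℂ) * τ‖₊ : ℝ≥0∞) ^ (-(2 * t)))) ≤
      (‖τ‖₊ : ℝ≥0∞) ^ (-t) * (C * C) := by
    calc (∑' p : ℕ+ × ℕ+,
        ((‖((p.1 : ℕ) : ℂ) + ((p.2 : ℕ) : ℂ) * τ‖₊ : ℝ≥0∞) ^ (-(2 * t))))
        ≤ ∑' p : ℕ+ × ℕ+,
            (‖τ‖₊ : ℝ≥0∞) ^ (-t) * (((p.1 : ℕ) : ℝ≥0∞) ^ (-t) * ((p.2 : ℕ) : ℝ≥0∞) ^ (-t)) :=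
          ENNReal.tsum_le_tsum hterm
      _ = (‖τ‖₊ : ℝ≥0∞) ^ (-t) *
            ∑' p : ℕ+ × ℕ+, (((p.1 : ℕ) : ℝ≥0∞) ^ (-t) * ((p.2 : ℕ) : ℝ≥0∞) ^ (-t)) :=
          ENNReal.tsum_mul_left
      _ = (‖τ‖₊ : ℝ≥0∞) ^ (-t) * (C * C) := by
          congr 1
          calc ∑' p : ℕ+ × ℕ+, (((p.1 : ℕ) : ℝ≥0∞) ^ (-t) * ((p.2 : ℕ) : ℝ≥0∞) ^ (-t))
              = ∑' m : ℕ+, ∑' n : ℕ+, (((m : ℕ) : ℝ≥0∞) ^ (-t) * ((n : ℕ) : ℝ≥0∞) ^ (-t)) :=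
                ENNReal.tsum_prod (f := fun (m n : ℕ+) => ((m : ℕ) : ℝ≥0∞) ^ (-t) * ((n : ℕ) : ℝ≥0∞) ^ (-t))
            _ = C * C := by
                simp_rw [ENNReal.tsum_mul_left]
                rw [ENNReal.tsum_mul_right, mul_comm]
  -- conclude
  refine lt_of_le_of_lt hsum_le ?_
  have h4 : (‖τ‖₊ : ℝ≥0∞) ^ (-t) * (C * C) ≤
      ENNReal.ofReal (‖τ‖ ^ (-t)) * ENNReal.ofReal K := by
    gcongr
    · rw [← enorm_eq_nnnorm, ← ofReal_norm, ENNReal.ofReal_rpow_of_pos hτ0]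
  refine lt_of_le_of_lt h4 ?_
  rw [← ENNReal.ofReal_mul (Real.rpow_nonneg hτ0.le _)]
  rw [ENNReal.ofReal_lt_ofReal_iff hε]
  -- real estimate: ‖τ‖^(-t) * K < ε
  have hKε : (0 : ℝ) < K / ε := div_pos hK0 hε
  have hbase : (K / ε) ^ t⁻¹ < ‖τ‖ := by
    have : (K / ε) ^ t⁻¹ + 1 ≤ N := le_max_right _ _
    linarith [le_trans this hNτ]
  have hpow : K / ε < ‖τ‖ ^ t := by
    have h5 : ((K / ε) ^ t⁻¹) ^ t < ‖τ‖ ^ t :=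
      Real.rpow_lt_rpow (Real.rpow_nonneg hKε.le _) hbase ht0
    rwa [Real.rpow_inv_rpow hKε.le ht0.ne'] at h5
  have hτt : (0 : ℝ) < ‖τ‖ ^ t := Real.rpow_pos_of_pos hτ0 _
  rw [Real.rpow_neg hτ0.le]
  rw [div_lt_iff₀ hε] at hpow
  rw [inv_mul_lt_iff₀ hτt]
  linarith
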